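/- Let [H•, E, G•] be a butterfly. Define a right action of E on H₁ × G₁ by (h, g)^e = (h^{π(e)}, g^{j(e)}). Then ∂_E : H₁ × G₁ → E, (h, g) ↦ κ(h) ι(g), together with this action, is a crossed module: ∂_E((h,g)^e) = e⁻¹ ∂_E(h,g) e for all e ∈ E, and (h', g')^{∂_E(h,g)} = (h,g)⁻¹ (h',g') (h,g) for all (h,g), (h',g') ∈ H₁ × G₁. -/
import Mathlib


theorem stmt_7 {H₁ H₀ G₁ G₀ E : Type*} [Group H₁] [Group H₀] [Group G₁] [Group G₀] [Group E]
    (dH : H₁ →* H₀) (actH : H₁ → H₀ → H₁)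
    (hH_one : ∀ g, actH g 1 = g)
    (hH_mul : ∀ g x y, actH g (x * y) = actH (actH g x) y)
    (hH_hom : ∀ g g' x, actH (g * g') x = actH g x * actH g' x)
    (hH_d : ∀ g x, dH (actH g x) = x⁻¹ * dH g * x)
    (hH_peiffer : ∀ g h, actH g (dH h) = h⁻¹ * g * h)
    (dG : G₁ →* G₀) (actG : G₁ → G₀ → G₁)
    (hG_one : ∀ g, actG g 1 = g)
    (hG_mul : ∀ g x y, actG g (x * y) = actG (actG g x) y)
    (hG_hom : ∀ g g' x, actG (g * g') x = actG g x * actG g' x)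
    (hG_d : ∀ g x, dG (actG g x) = x⁻¹ * dG g * x)
    (hG_peiffer : ∀ g h, actG g (dG h) = h⁻¹ * g * h)
    (κ : H₁ →* E) (ι : G₁ →* E) (π : E →* H₀) (j : E →* G₀)
    (hπκ : ∀ h, π (κ h) = dH h)
    (hjι : ∀ g, j (ι g) = dG g)
    (hjκ : ∀ h, j (κ h) = 1)
    (hπsurj : Function.Surjective π)
    (hιinj : Function.Injective ι)
    (hkerπ : ∀ e, π e = 1 ↔ ∃ g, ι g = e)
    (heqG : ∀ g e, ι (actG g (j e)) = e⁻¹ * ι g * e)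
    (heqH : ∀ h e, κ (actH h (π e)) = e⁻¹ * κ h * e) :
    (∀ (p : H₁ × G₁) (e : E),
        κ (actH p.1 (π e)) * ι (actG p.2 (j e)) = e⁻¹ * (κ p.1 * ι p.2) * e) ∧
      (∀ p q : H₁ × G₁,
        ((actH q.1 (π (κ p.1 * ι p.2)), actG q.2 (j (κ p.1 * ι p.2))) : H₁ × G₁) =
          p⁻¹ * q * p) := by
  constructor
  · intro p e
    rw [heqH, heqG]
    group
  · intro p q
    have hπι : ∀ g : G₁, π (ι g) = 1 := fun g => (hkerπ (ι g)).mpr ⟨g, rfl⟩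
    have h1 : π (κ p.1 * ι p.2) = dH p.1 := by
      rw [map_mul, hπκ, hπι, mul_one]
    have h2 : j (κ p.1 * ι p.2) = dG p.2 := by
      rw [map_mul, hjκ, hjι, one_mul]
    rw [h1, h2, hH_peiffer, hG_peiffer]
    rfl
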